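/- For n ≥ 4, let Γ be the simple graph whose vertices are the pairs (p,ε) with p a 2-element subset of {1,…,n} and ε ∈ {+1,−1}, where (p,ε) and (q,η) are adjacent if and only if p ≠ q and |p ∩ q| = 1 (the collinearity graph of the Fischer space 𝒟_n of the Weyl group of type D_n). The characteristic polynomial of the adjacency matrix of Γ over ℚ is (X − (4n−8))·(X − (2n−8))^{n−1}·(X + 4)^{n(n−3)/2}·X^{n(n−1)/2}. -/

import Mathlib

open Polynomial

/-- The vertices of the collinearity graph of the Fischer space `𝒟_n`: pairs `(p, ε)`
with `p` a 2-element subset of `{1, …, n}` and `ε ∈ {+1, -1}`. -/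
abbrev DnVert (n : ℕ) : Type := {p : Finset (Fin n) // p.card = 2} × ℤˣ

/-- The adjacency matrix of the collinearity graph of `𝒟_n`: `(p, ε)` and `(q, η)` are
adjacent exactly when `p ≠ q` and `p, q` share exactly one point. -/
def dnAdj (n : ℕ) : Matrix (DnVert n) (DnVert n) ℚ :=
  Matrix.of fun p q => if p.1 ≠ q.1 ∧ (p.1.1 ∩ q.1.1).card = 1 then 1 else 0

namespace DnCharpolyAux

open Matrix Finset

section general
variable {m ι : Type*} [Fintype m] [Fintype ι] [DecidableEq m] [DecidableEq ι]

lemma charmatrix_eq (M : Matrix ι ι ℚ) :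
    charmatrix M = (X : ℚ[X]) • (1 : Matrix ι ι ℚ[X]) - M.map C := by
  rw [charmatrix]
  congr 1
  ext i j
  by_cases h : i = j <;>
    simp [h, Matrix.scalar_apply, Matrix.smul_apply, Matrix.one_apply, Matrix.diagonal_apply]

lemma my_charpoly_zero : (0 : Matrix ι ι ℚ).charpoly = X ^ Fintype.card ι := by
  rw [Matrix.charpoly, charmatrix_eq]
  simp [Matrix.det_smul, Finset.card_univ]

lemma my_charpoly_conj (P Q M : Matrix ι ι ℚ) (hPQ : P * Q = 1) :
    (P * M * Q).charpoly = M.charpoly := by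
  have key : charmatrix (P * M * Q) = P.map C * charmatrix M * Q.map C := by
    rw [charmatrix_eq, charmatrix_eq, Matrix.mul_sub, Matrix.sub_mul]
    congr 1
    · rw [Matrix.mul_smul, Matrix.mul_one, Matrix.smul_mul, ← Matrix.map_mul, hPQ]
      simp
    · rw [← Matrix.map_mul, ← Matrix.map_mul]
  have hdet : (P.map (C : ℚ →+* ℚ[X])).det * (Q.map C).det = 1 := by
    rw [← Matrix.det_mul, ← Matrix.map_mul, hPQ]
    simp
  rw [Matrix.charpoly, key, Matrix.det_mul, Matrix.det_mul, Matrix.charpoly,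
    mul_right_comm, hdet, one_mul]

lemma my_charpoly_shift (M : Matrix ι ι ℚ) (c : ℚ) :
    (M + c • (1 : Matrix ι ι ℚ)).charpoly = M.charpoly.comp (X - C c) := by
  have : M.charpoly.comp (X - C c) =
      (Polynomial.eval₂RingHom (C : ℚ →+* ℚ[X]) (X - C c)) M.charpoly := rfl
  rw [this, Matrix.charpoly, Matrix.charpoly, RingHom.map_det]
  congr 1
  ext i j
  by_cases h : i = j
  · subst h
    simp [charmatrix_apply_eq, Matrix.one_apply, C_add, Matrix.smul_apply]
    ring
  · simp [charmatrix_apply_ne _ _ _ h, Matrix.one_apply_ne h, Matrix.smul_apply,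
      Matrix.add_apply]

lemma my_charpoly_mul_comm (A : Matrix m ι ℚ) (B : Matrix ι m ℚ) :
    (A * B).charpoly * X ^ Fintype.card ι = X ^ Fintype.card m * (B * A).charpoly := by
  set A' := A.map (C : ℚ →+* ℚ[X]) with hA'
  set B' := B.map (C : ℚ →+* ℚ[X]) with hB'
  set U : Matrix (m ⊕ ι) (m ⊕ ι) ℚ[X] := fromBlocks ((X : ℚ[X]) • 1) A' B' 1 with hU
  set V : Matrix (m ⊕ ι) (m ⊕ ι) ℚ[X] := fromBlocks 1 0 (-B') ((X : ℚ[X]) • 1) with hV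
  have hUV : U * V = fromBlocks (charmatrix (A * B)) ((X : ℚ[X]) • A') 0
      ((X : ℚ[X]) • (1 : Matrix ι ι ℚ[X])) := by
    rw [hU, hV, fromBlocks_multiply, charmatrix_eq, Matrix.map_mul]
    refine Matrix.fromBlocks_inj.mpr ⟨?_, ?_, ?_, ?_⟩ <;>
      simp [Matrix.mul_smul, Matrix.smul_mul, Matrix.mul_neg, sub_eq_add_neg] <;> rfl
  have hVU : V * U = fromBlocks ((X : ℚ[X]) • (1 : Matrix m m ℚ[X])) A' 0
      (charmatrix (B * A)) := by
    rw [hU, hV, fromBlocks_multiply, charmatrix_eq, Matrix.map_mul]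
    refine Matrix.fromBlocks_inj.mpr ⟨?_, ?_, ?_, ?_⟩ <;>
      simp [Matrix.mul_smul, Matrix.smul_mul, Matrix.neg_mul, sub_eq_add_neg, add_comm] <;> rfl
  have hdet : (U * V).det = (V * U).det := by
    rw [Matrix.det_mul, Matrix.det_mul, mul_comm]
  rw [hUV, hVU, Matrix.det_fromBlocks_zero₂₁, Matrix.det_fromBlocks_zero₂₁] at hdet
  simpa [Matrix.det_smul, Finset.card_univ, Matrix.charpoly] using hdet

lemma my_charpoly_unit (M : Matrix Unit Unit ℚ) : M.charpoly = X - C (M () ()) := by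
  rw [Matrix.charpoly, Matrix.det_unique]
  simp [charmatrix_apply_eq]

lemma comp_lin (a b : ℚ) : (X - C a).comp (X - C b) = X - C (a + b) := by
  simp [sub_comp, C_add]
  ring

end general

abbrev Esub (n : ℕ) : Type := {p : Finset (Fin n) // p.card = 2}

def Nmat (n : ℕ) : Matrix (Fin n) (Esub n) ℚ := Matrix.of fun i p => if i ∈ p.1 then 1 else 0
def Mmat (n : ℕ) : Matrix (Esub n) (Fin n) ℚ := Matrix.of fun p i => if i ∈ p.1 then 2 else 0
def Amat (n : ℕ) : Matrix (Esub n) (Esub n) ℚ :=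
  Matrix.of fun p q => if p ≠ q ∧ (p.1 ∩ q.1).card = 1 then 1 else 0
def umat (n : ℕ) : Matrix (Fin n) Unit ℚ := Matrix.of fun _ _ => 2
def vmat (n : ℕ) : Matrix Unit (Fin n) ℚ := Matrix.of fun _ _ => 1

lemma card_inter_ne_two {n : ℕ} (p q : Esub n) (hpq : p ≠ q) : (p.1 ∩ q.1).card ≠ 2 := by
  intro h
  apply hpq
  have h1 : p.1 ∩ q.1 = p.1 :=
    Finset.eq_of_subset_of_card_le (Finset.inter_subset_left (s₂ := q.1)) (by rw [h, p.2])
  have h2 : p.1 ∩ q.1 = q.1 :=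
    Finset.eq_of_subset_of_card_le (Finset.inter_subset_right (s₁ := p.1)) (by rw [h, q.2])
  exact Subtype.ext (h1.symm.trans h2)

lemma key1 (n : ℕ) : Amat n + Amat n = Mmat n * Nmat n + (-4 : ℚ) • 1 := by
  ext p q
  have hsum : (∑ i, (if i ∈ p.1 then (2:ℚ) else 0) * (if i ∈ q.1 then (1:ℚ) else 0))
      = 2 * (p.1 ∩ q.1).card := by
    have h : ∀ i, (if i ∈ p.1 then (2:ℚ) else 0) * (if i ∈ q.1 then (1:ℚ) else 0)
        = if i ∈ p.1 ∩ q.1 then 2 else 0 := by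
      intro i
      by_cases h1 : i ∈ p.1 <;> by_cases h2 : i ∈ q.1 <;> simp [h1, h2]
    rw [Finset.sum_congr rfl fun i _ => h i, Finset.sum_ite_mem, Finset.univ_inter,
      Finset.sum_const, nsmul_eq_mul]
    ring
  simp only [Matrix.add_apply, Matrix.mul_apply, Matrix.smul_apply, Mmat, Nmat, Amat,
    Matrix.of_apply, Matrix.one_apply]
  rw [show (∑ x, (if x ∈ p.1 then (2:ℚ) else 0) * (if x ∈ q.1 then (1:ℚ) else 0))
    = 2 * (p.1 ∩ q.1).card from hsum]
  by_cases hpq : p = q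
  · subst hpq
    simp [Finset.inter_self, p.2]
    norm_num
  · have h2 := card_inter_ne_two p q hpq
    by_cases hc : (p.1 ∩ q.1).card = 1
    · simp [hpq, hc]
      norm_num
    · have h0 : (p.1 ∩ q.1).card = 0 := by
        have := Finset.card_le_card (Finset.inter_subset_left (s₁ := p.1) (s₂ := q.1))
        rw [p.2] at this
        omega
      simp [hpq, hc, h0]

lemma count_pairs_mem {n : ℕ} (i : Fin n) :
    (Finset.univ.filter (fun s : Finset (Fin n) => s.card = 2 ∧ i ∈ s)).card = n - 1 := by
  have hb : ∀ s ∈ Finset.univ.filter (fun s : Finset (Fin n) => s.card = 2 ∧ i ∈ s),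
      s.erase i ∈ Finset.powersetCard 1 (Finset.univ.erase i) := by
    intro s hs
    simp only [Finset.mem_filter, Finset.mem_univ, true_and] at hs
    rw [Finset.mem_powersetCard]
    exact ⟨Finset.erase_subset_erase i (Finset.subset_univ s),
      by rw [Finset.card_erase_of_mem hs.2, hs.1]⟩
  rw [Finset.card_bij' (fun s _ => s.erase i) (fun t _ => insert i t) hb ?_ ?_ ?_]
  · rw [Finset.card_powersetCard, Finset.card_erase_of_mem (Finset.mem_univ i),
      Finset.card_univ, Fintype.card_fin, Nat.choose_one_right]
  · intro t ht
    rw [Finset.mem_powersetCard] at ht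
    have hit : i ∉ t := fun hmem => (Finset.mem_erase.mp (ht.1 hmem)).1 rfl
    simp only [Finset.mem_filter, Finset.mem_univ, true_and]
    exact ⟨by rw [Finset.card_insert_of_notMem hit, ht.2], Finset.mem_insert_self i t⟩
  · intro s hs
    simp only [Finset.mem_filter, Finset.mem_univ, true_and] at hs
    exact Finset.insert_erase hs.2
  · intro t ht
    rw [Finset.mem_powersetCard] at ht
    exact Finset.erase_insert (fun hmem => (Finset.mem_erase.mp (ht.1 hmem)).1 rfl)

lemma key2 (n : ℕ) (hn : 4 ≤ n) :
    Nmat n * Mmat n = umat n * vmat n + ((2 * n : ℚ) - 4) • 1 := by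
  ext i j
  simp only [Matrix.mul_apply, Matrix.add_apply, Matrix.smul_apply, Nmat, Mmat, umat, vmat,
    Matrix.of_apply, Matrix.one_apply, Finset.univ_unique, Finset.sum_singleton]
  have hstep : ∀ p : Esub n, (if i ∈ p.1 then (1:ℚ) else 0) * (if j ∈ p.1 then (2:ℚ) else 0)
      = if i ∈ p.1 ∧ j ∈ p.1 then 2 else 0 := by
    intro p
    by_cases h1 : i ∈ p.1 <;> by_cases h2 : j ∈ p.1 <;> simp [h1, h2]
  rw [Finset.sum_congr rfl fun p _ => hstep p]
  by_cases hij : i = j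
  · subst hij
    simp only [and_self, if_pos rfl]
    have : (∑ p : Esub n, if i ∈ p.1 then (2:ℚ) else 0)
        = ∑ s ∈ Finset.powersetCard 2 (Finset.univ : Finset (Fin n)),
            (if i ∈ s then (2:ℚ) else 0) := by
      rw [Finset.sum_subtype _ (fun s => Finset.mem_powersetCard_univ) ]
    rw [this, Finset.sum_ite, Finset.sum_const, Finset.sum_const_zero, add_zero]
    have hcard : (Finset.powersetCard 2 (Finset.univ : Finset (Fin n))).filter (i ∈ ·)
        = Finset.univ.filter (fun s : Finset (Fin n) => s.card = 2 ∧ i ∈ s) := by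
      ext s
      simp [Finset.mem_powersetCard_univ, and_comm]
    have h1n : (1:ℕ) ≤ n := by omega
    rw [hcard, count_pairs_mem i, nsmul_eq_mul, Nat.cast_sub h1n]
    simp only [if_true, smul_eq_mul, mul_one]
    push_cast
    ring
  · have hp0 : ({i, j} : Finset (Fin n)).card = 2 := Finset.card_pair hij
    have hmem : ∀ p : Esub n, (i ∈ p.1 ∧ j ∈ p.1) ↔ p = ⟨{i, j}, hp0⟩ := by
      intro p
      constructor
      · rintro ⟨h1, h2⟩
        have hsub : ({i, j} : Finset (Fin n)) ⊆ p.1 := by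
          rw [Finset.insert_subset_iff, Finset.singleton_subset_iff]
          exact ⟨h1, h2⟩
        have := Finset.eq_of_subset_of_card_le hsub (by rw [p.2, hp0])
        exact Subtype.ext this.symm
      · rintro rfl
        exact ⟨Finset.mem_insert_self i _, Finset.mem_insert_of_mem (Finset.mem_singleton_self j)⟩
    rw [Finset.sum_congr rfl fun p _ => by rw [if_congr (hmem p) rfl rfl]]
    rw [Finset.sum_ite_eq' Finset.univ (⟨{i, j}, hp0⟩ : Esub n) (fun _ => (2:ℚ))]
    simp [hij]

def signEquiv (n : ℕ) : DnVert n ≃ Esub n ⊕ Esub n where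
  toFun x := if x.2 = 1 then Sum.inl x.1 else Sum.inr x.1
  invFun y := Sum.elim (fun p => (p, 1)) (fun p => (p, -1)) y
  left_inv := by
    rintro ⟨p, ε⟩
    rcases Int.units_eq_one_or ε with h | h <;> simp [h]
  right_inv := by
    rintro (p | p) <;> simp

lemma reindex_dnAdj (n : ℕ) :
    Matrix.reindex (signEquiv n) (signEquiv n) (dnAdj n)
      = Matrix.fromBlocks (Amat n) (Amat n) (Amat n) (Amat n) := by
  ext ij kl
  rcases ij with p | p <;> rcases kl with q | q <;>
    simp [dnAdj, Amat, signEquiv, Matrix.submatrix_apply]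

def Tmat (n : ℕ) : Matrix (Esub n ⊕ Esub n) (Esub n ⊕ Esub n) ℚ :=
  Matrix.fromBlocks 1 1 1 (-1)

lemma Tmat_mul_half (n : ℕ) : Tmat n * ((2:ℚ)⁻¹ • Tmat n) = 1 := by
  rw [Matrix.mul_smul, Tmat, Matrix.fromBlocks_multiply]
  norm_num
  have h2 : ((2:ℚ))⁻¹ • (2 : Matrix (Esub n) (Esub n) ℚ) = 1 := by
    rw [show (2 : Matrix (Esub n) (Esub n) ℚ) = (2:ℚ) • 1 by
      rw [two_smul, one_add_one_eq_two], smul_smul]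
    norm_num
  rw [Matrix.fromBlocks_smul]
  simp [h2, Matrix.fromBlocks_one]

lemma conj_blocks (n : ℕ) :
    Tmat n * Matrix.fromBlocks (Amat n) (Amat n) (Amat n) (Amat n) * ((2:ℚ)⁻¹ • Tmat n)
      = Matrix.fromBlocks (Amat n + Amat n) 0 0 0 := by
  rw [Matrix.mul_smul, Tmat, Matrix.fromBlocks_multiply, Matrix.fromBlocks_multiply,
    Matrix.fromBlocks_smul]
  refine Matrix.fromBlocks_inj.mpr ⟨?_, ?_, ?_, ?_⟩ <;>
    simp [Matrix.neg_mul, Matrix.mul_neg, smul_add, two_smul, sub_eq_add_neg] <;>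
    module

end DnCharpolyAux

open DnCharpolyAux Matrix in
/-- for `n ≥ 4`, the characteristic polynomial of the collinearity graph of
the Fischer space `𝒟_n` is
`(X - (4n-8)) (X - (2n-8))^{n-1} (X + 4)^{n(n-3)/2} X^{n(n-1)/2}`. -/
theorem dn_graph_charpoly (n : ℕ) (hn : 4 ≤ n) :
    (dnAdj n).charpoly =
      (X - C ((4 * n : ℚ) - 8)) * (X - C ((2 * n : ℚ) - 8)) ^ (n - 1) *
        (X + C 4) ^ (n * (n - 3) / 2) * X ^ (n * (n - 1) / 2) := by
  classical
  have hcE : Fintype.card (Esub n) = n * (n - 1) / 2 := by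
    rw [Fintype.card_finset_len, Fintype.card_fin, Nat.choose_two_right]
  have hsplit : n * (n - 1) / 2 = n * (n - 3) / 2 + n := by
    have h : n * (n - 1) = n * (n - 3) + 2 * n := by
      rw [show n - 1 = (n - 3) + 2 by omega, Nat.mul_add]
      ring
    rw [h, Nat.add_mul_div_left _ _ (by norm_num : 0 < 2)]
  -- charpoly of the 1×1 matrix `vmat * umat`
  have hvu : (vmat n * umat n).charpoly = X - C (2 * (n:ℚ)) := by
    rw [my_charpoly_unit]
    congr 1
    simp [vmat, umat, Matrix.mul_apply, Finset.sum_const, Finset.card_univ]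
    ring
  -- charpoly of the all-2 matrix `umat * vmat`
  have huv : (umat n * vmat n).charpoly = X ^ (n - 1) * (X - C (2 * (n:ℚ))) := by
    have h := my_charpoly_mul_comm (umat n) (vmat n)
    rw [hvu, Fintype.card_fin, Fintype.card_unit, pow_one] at h
    have hxn : (X : ℚ[X]) ^ n = X ^ (n - 1) * X := by
      rw [← pow_succ, show n - 1 + 1 = n by omega]
    rw [hxn, mul_assoc, mul_comm (X : ℚ[X]) (X - C (2 * (n:ℚ))), ← mul_assoc] at h
    exact mul_right_cancel₀ X_ne_zero h
  -- charpoly of `Nmat * Mmat`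
  have hNM : (Nmat n * Mmat n).charpoly
      = (X - C (2 * (n:ℚ) - 4)) ^ (n - 1) * (X - C (4 * (n:ℚ) - 4)) := by
    rw [key2 n hn, my_charpoly_shift, huv, mul_comp, pow_comp, X_comp, comp_lin,
      show 2 * (n:ℚ) + (2 * (n:ℚ) - 4) = 4 * (n:ℚ) - 4 by ring]
  -- charpoly of `Mmat * Nmat`
  have hMN : (Mmat n * Nmat n).charpoly
      = X ^ (n * (n - 3) / 2) * ((X - C (2 * (n:ℚ) - 4)) ^ (n - 1)
          * (X - C (4 * (n:ℚ) - 4))) := by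
    have h := my_charpoly_mul_comm (Mmat n) (Nmat n)
    rw [Fintype.card_fin, hcE, hsplit, hNM, pow_add] at h
    rw [show (X:ℚ[X]) ^ (n * (n - 3) / 2) * X ^ n
          * ((X - C (2 * (n:ℚ) - 4)) ^ (n - 1) * (X - C (4 * (n:ℚ) - 4)))
        = X ^ (n * (n - 3) / 2) * ((X - C (2 * (n:ℚ) - 4)) ^ (n - 1)
          * (X - C (4 * (n:ℚ) - 4))) * X ^ n by ring] at h
    exact mul_right_cancel₀ (pow_ne_zero _ X_ne_zero) h
  -- charpoly of `Amat + Amat`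
  have hB2 : (Amat n + Amat n).charpoly
      = (X + C 4) ^ (n * (n - 3) / 2) * ((X - C (2 * (n:ℚ) - 8)) ^ (n - 1)
          * (X - C (4 * (n:ℚ) - 8))) := by
    rw [key1 n, my_charpoly_shift, hMN, mul_comp, mul_comp, pow_comp, pow_comp, X_comp,
      comp_lin, comp_lin, C_neg, sub_neg_eq_add,
      show 2 * (n:ℚ) - 4 + -4 = 2 * (n:ℚ) - 8 by ring,
      show 4 * (n:ℚ) - 4 + -4 = 4 * (n:ℚ) - 8 by ring]
  -- assemble
  rw [← Matrix.charpoly_reindex (signEquiv n) (dnAdj n), reindex_dnAdj,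
    ← my_charpoly_conj (Tmat n) ((2:ℚ)⁻¹ • Tmat n) _ (Tmat_mul_half n), conj_blocks,
    Matrix.charpoly_fromBlocks_zero₂₁, my_charpoly_zero, hcE, hB2]
  ring
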